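/- Let (g, [·,·], α) be a Hom-Lie superalgebra over ℂ. Then Cur g := ℂ[∂] ⊗ g, with ℤ₂-grading (Cur g)_θ = ℂ[∂] ⊗ g_θ, twist map α(f(∂) ⊗ a) = f(∂) ⊗ α(a), and λ-bracket [(f(∂) ⊗ a)_λ (g(∂) ⊗ b)] = f(−λ) g(∂+λ) ⊗ [a, b] for a, b ∈ g, is a Hom-Lie conformal superalgebra. -/

import Mathlib

noncomputable section

namespace HLCS

open scoped BigOperators

/-- Evaluation at `l : ℂ` of a polynomial (in `λ`) with coefficients in `M`,
encoded as a finitely supported family of coefficients. -/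
def pev {M : Type} [AddCommGroup M] [Module ℂ M] (l : ℂ) (p : ℕ →₀ M) : M :=
  p.sum fun n r => l ^ n • r

/-- Evaluation of a polynomial with coefficients in `M` at an operator `T`
(used for substitutions such as `-λ - ∂`). -/
def pevOp {M : Type} [AddCommGroup M] [Module ℂ M] (T : Module.End ℂ M) (p : ℕ →₀ M) : M :=
  p.sum fun n r => (T ^ n) r

/-- The super sign `(-1)^{|a||b|}` attached to parities `i`, `j`. -/
def sg (i j : ZMod 2) : ℂ := (-1 : ℂ) ^ (i * j).val

/-- The data of a `ℤ₂`-graded `ℂ[∂]`-module `R` with an endomorphism `α` and a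
`ℂ`-bilinear `λ`-bracket with values in `ℂ[λ] ⊗ R` (encoded by its coefficients). -/
structure Data (R : Type) [AddCommGroup R] [Module ℂ R] where
  der : Module.End ℂ R
  alpha : Module.End ℂ R
  G : ZMod 2 → Submodule ℂ R
  br : R →ₗ[ℂ] R →ₗ[ℂ] (ℕ →₀ R)

namespace Data

variable {R : Type} [AddCommGroup R] [Module ℂ R] (S : Data R)

/-- `[a_λ b]` evaluated at `λ = l`. -/
def lb (l : ℂ) (a b : R) : R := pev l (S.br a b)

/-- `[a_{-l-∂} b]` : the bracket with `-l - ∂` substituted for `λ`. -/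
def lbOp (l : ℂ) (a b : R) : R :=
  pevOp ((-l) • (1 : Module.End ℂ R) - S.der) (S.br a b)

/-- Multiplicativity: `α [a_λ b] = [α(a)_λ α(b)]`. -/
def Mult : Prop := ∀ (l : ℂ) (a b : R), S.alpha (S.lb l a b) = S.lb l (S.alpha a) (S.alpha b)

end Data

variable {R : Type} [AddCommGroup R] [Module ℂ R]

/-- `(R, α)` with the given data is a Hom-Lie conformal superalgebra.
All polynomial identities in `λ, μ` are stated by evaluating at arbitrary
complex numbers (which is equivalent, `ℂ` being infinite). -/
structure IsHLCS (S : Data R) : Prop where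
  internal : DirectSum.IsInternal S.G
  der_even : ∀ i, ∀ a ∈ S.G i, S.der a ∈ S.G i
  alpha_even : ∀ i, ∀ a ∈ S.G i, S.alpha a ∈ S.G i
  alpha_der : ∀ a, S.alpha (S.der a) = S.der (S.alpha a)
  br_grade : ∀ i j, ∀ a ∈ S.G i, ∀ b ∈ S.G j, ∀ n, S.br a b n ∈ S.G (i + j)
  conf_left : ∀ (l : ℂ) (a b : R), S.lb l (S.der a) b = -l • S.lb l a b
  conf_right : ∀ (l : ℂ) (a b : R), S.lb l a (S.der b) = S.der (S.lb l a b) + l • S.lb l a b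
  skew : ∀ i j, ∀ a ∈ S.G i, ∀ b ∈ S.G j, ∀ l : ℂ,
    S.lb l a b = (-sg i j) • S.lbOp l b a
  jacobi : ∀ i j, ∀ a ∈ S.G i, ∀ b ∈ S.G j, ∀ (c : R) (l m : ℂ),
    S.lb l (S.alpha a) (S.lb m b c) =
      S.lb (l + m) (S.lb l a b) (S.alpha c) + sg i j • S.lb m (S.alpha b) (S.lb l a c)

end HLCS
namespace HLCS

variable {V : Type} [AddCommGroup V] [Module ℂ V]

/-- The data of a `ℤ₂`-graded complex vector space with a bilinear bracket and a twist. -/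
structure SuperData (V : Type) [AddCommGroup V] [Module ℂ V] where
  alpha : Module.End ℂ V
  G : ZMod 2 → Submodule ℂ V
  br : V →ₗ[ℂ] V →ₗ[ℂ] V

/-- `(V, [·,·], α)` is a Hom-Lie superalgebra. -/
structure IsHLSuper (L : SuperData V) : Prop where
  internal : DirectSum.IsInternal L.G
  alpha_even : ∀ i, ∀ a ∈ L.G i, L.alpha a ∈ L.G i
  br_grade : ∀ i j, ∀ a ∈ L.G i, ∀ b ∈ L.G j, L.br a b ∈ L.G (i + j)
  skew : ∀ i j, ∀ a ∈ L.G i, ∀ b ∈ L.G j, L.br a b = (-sg i j) • L.br b a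
  jacobi : ∀ i j, ∀ a ∈ L.G i, ∀ b ∈ L.G j, ∀ c : V,
    L.br (L.alpha a) (L.br b c) =
      L.br (L.br a b) (L.alpha c) + sg i j • L.br (L.alpha b) (L.br a c)

/-- The lift of a subspace `W ⊆ V` to `ℂ[∂] ⊗ V` (coefficient-wise membership). -/
def liftG (W : Submodule ℂ V) : Submodule ℂ (ℕ →₀ V) where
  carrier := {p | ∀ n, p n ∈ W}
  add_mem' := by
    intro p q hp hq n
    rw [Finsupp.add_apply]
    exact W.add_mem (hp n) (hq n)
  zero_mem' := by
    intro n
    rw [Finsupp.zero_apply]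
    exact W.zero_mem
  smul_mem' := by
    intro c p hp n
    rw [Finsupp.smul_apply]
    exact W.smul_mem c (hp n)

/-- The element `f(∂) ⊗ a` of `Cur V = ℂ[∂] ⊗ V`, encoded in `ℕ →₀ V`. -/
def curElt (f : Polynomial ℂ) (a : V) : ℕ →₀ V :=
  f.sum fun n c => Finsupp.single n (c • a)

end HLCS
namespace HLCS

variable {V : Type} [AddCommGroup V] [Module ℂ V]


section CurAux
open Polynomial


variable {V : Type} [AddCommGroup V] [Module ℂ V]

theorem curElt_apply (f : Polynomial ℂ) (a : V) (n : ℕ) :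
    curElt f a n = f.coeff n • a := by
  classical
  rw [curElt, Polynomial.sum, Finset.sum_apply']
  rw [Finset.sum_eq_single n]
  · simp [Finsupp.single_apply]
  · intro m _ hmn; simp [Finsupp.single_apply, hmn]
  · intro hn; simp [Polynomial.notMem_support_iff.mp hn]

theorem curElt_add (f g : Polynomial ℂ) (a : V) :
    curElt (f + g) a = curElt f a + curElt g a := by
  ext n; simp [curElt_apply, coeff_add, add_smul]

theorem curElt_sub (f g : Polynomial ℂ) (a : V) :
    curElt (f - g) a = curElt f a - curElt g a := by
  ext n; simp [curElt_apply, coeff_sub, sub_smul]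

theorem curElt_zero_left (a : V) : curElt 0 a = 0 := by
  ext n; simp [curElt_apply]

theorem curElt_Cmul (c : ℂ) (f : Polynomial ℂ) (a : V) :
    curElt (C c * f) a = c • curElt f a := by
  ext n; simp [curElt_apply, coeff_C_mul, mul_smul]

theorem curElt_add_right (f : Polynomial ℂ) (a b : V) :
    curElt f (a + b) = curElt f a + curElt f b := by
  ext n; simp [curElt_apply, smul_add]

theorem curElt_smul_right (f : Polynomial ℂ) (c : ℂ) (a : V) :
    curElt f (c • a) = c • curElt f a := by
  ext n; simp [curElt_apply, smul_smul, mul_comm]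

theorem curElt_zero_right (f : Polynomial ℂ) : curElt f (0 : V) = 0 := by
  ext n; simp [curElt_apply]

theorem curElt_monomial (n : ℕ) (c : ℂ) (a : V) :
    curElt (monomial n c) a = Finsupp.single n (c • a) := by
  ext p; simp [curElt_apply, coeff_monomial, Finsupp.single_apply, ite_smul]

theorem curElt_X_pow (n : ℕ) (a : V) : curElt (X ^ n) a = Finsupp.single n a := by
  rw [X_pow_eq_monomial, curElt_monomial, one_smul]

theorem curElt_finset_sum {ι : Type*} (s : Finset ι) (g : ι → Polynomial ℂ) (a : V) :
    curElt (∑ i ∈ s, g i) a = ∑ i ∈ s, curElt (g i) a := by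
  classical
  induction s using Finset.induction_on with
  | empty => simp [curElt_zero_left]
  | insert _ _ h ih => rw [Finset.sum_insert h, Finset.sum_insert h, curElt_add, ih]

def curElt2 (F : Polynomial (Polynomial ℂ)) (a : V) : ℕ →₀ (ℕ →₀ V) :=
  F.sum fun n r => Finsupp.single n (curElt r a)

theorem curElt2_apply (F : Polynomial (Polynomial ℂ)) (a : V) (n : ℕ) :
    curElt2 F a n = curElt (F.coeff n) a := by
  classical
  rw [curElt2, Polynomial.sum, Finset.sum_apply']
  rw [Finset.sum_eq_single n]
  · simp [Finsupp.single_apply]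
  · intro m _ hmn; simp [Finsupp.single_apply, hmn]
  · intro hn; simp [Polynomial.notMem_support_iff.mp hn, curElt_zero_left]

theorem curElt2_add (F G : Polynomial (Polynomial ℂ)) (a : V) :
    curElt2 (F + G) a = curElt2 F a + curElt2 G a := by
  ext n; simp [curElt2_apply, coeff_add, curElt_add]

theorem curElt2_CCmul (c : ℂ) (F : Polynomial (Polynomial ℂ)) (a : V) :
    curElt2 (Polynomial.C (Polynomial.C c) * F) a = c • curElt2 F a := by
  ext n; simp [curElt2_apply, coeff_C_mul, curElt_Cmul]

theorem curElt2_add_right (F : Polynomial (Polynomial ℂ)) (a b : V) :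
    curElt2 F (a + b) = curElt2 F a + curElt2 F b := by
  ext n; simp [curElt2_apply, curElt_add_right]

theorem curElt2_smul_right (F : Polynomial (Polynomial ℂ)) (c : ℂ) (a : V) :
    curElt2 F (c • a) = c • curElt2 F a := by
  ext n; simp [curElt2_apply, curElt_smul_right]

def curElt2L (F : Polynomial (Polynomial ℂ)) : V →ₗ[ℂ] (ℕ →₀ (ℕ →₀ V)) where
  toFun a := curElt2 F a
  map_add' a b := curElt2_add_right F a b
  map_smul' c a := curElt2_smul_right F c a



section M
variable {M : Type} [AddCommGroup M] [Module ℂ M]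

def pevLM (l : ℂ) : (ℕ →₀ M) →ₗ[ℂ] M :=
  Finsupp.lsum ℂ fun n => (l ^ n) • (LinearMap.id : M →ₗ[ℂ] M)

theorem pev_eq (l : ℂ) (p : ℕ →₀ M) : pev l p = pevLM l p := by
  rw [pev, pevLM, Finsupp.lsum_apply]
  exact Finsupp.sum_congr fun n _ => by simp

def pevOpLM (T : Module.End ℂ M) : (ℕ →₀ M) →ₗ[ℂ] M := Finsupp.lsum ℂ fun n => T ^ n

theorem pevOp_eq (T : Module.End ℂ M) (p : ℕ →₀ M) : pevOp T p = pevOpLM T p := by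
  rw [pevOp, pevOpLM, Finsupp.lsum_apply]

theorem pev_add (l : ℂ) (p q : ℕ →₀ M) : pev l (p + q) = pev l p + pev l q := by
  simp [pev_eq]

theorem pev_smul (l : ℂ) (c : ℂ) (p : ℕ →₀ M) : pev l (c • p) = c • pev l p := by
  simp [pev_eq]

theorem pev_zero (l : ℂ) : pev l (0 : ℕ →₀ M) = 0 := by simp [pev_eq]

theorem pevOp_zero (T : Module.End ℂ M) : pevOp T (0 : ℕ →₀ M) = 0 := by simp [pevOp_eq]

theorem pev_single (l : ℂ) (n : ℕ) (x : M) : pev l (Finsupp.single n x) = l ^ n • x := by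
  simp [pev_eq, pevLM]

theorem pevOp_add (T : Module.End ℂ M) (p q : ℕ →₀ M) :
    pevOp T (p + q) = pevOp T p + pevOp T q := by simp [pevOp_eq]

theorem pevOp_smul (T : Module.End ℂ M) (c : ℂ) (p : ℕ →₀ M) :
    pevOp T (c • p) = c • pevOp T p := by simp [pevOp_eq]

theorem pevOp_single (T : Module.End ℂ M) (n : ℕ) (x : M) :
    pevOp T (Finsupp.single n x) = (T ^ n) x := by simp [pevOp_eq, pevOpLM]

end M

variable {V : Type} [AddCommGroup V] [Module ℂ V]

def derL : (ℕ →₀ V) →ₗ[ℂ] (ℕ →₀ V) := Finsupp.lmapDomain V ℂ (fun n => n + 1)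

theorem derL_apply_zero (p : ℕ →₀ V) : derL p 0 = 0 := by
  rw [derL, Finsupp.lmapDomain_apply]
  refine Finsupp.mapDomain_notin_range _ _ ?_
  rintro ⟨m, hm⟩
  simp at hm

theorem derL_apply_succ (p : ℕ →₀ V) (n : ℕ) : derL p (n + 1) = p n := by
  rw [derL, Finsupp.lmapDomain_apply]
  exact Finsupp.mapDomain_apply (fun a b h => by simpa using h) p n


theorem derL_curElt (f : Polynomial ℂ) (a : V) :
    derL (curElt f a) = curElt (X * f) a := by
  ext n
  cases n with
  | zero => rw [derL_apply_zero]; simp [curElt_apply, mul_coeff_zero]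
  | succ m => rw [derL_apply_succ]; simp [curElt_apply, coeff_X_mul]

def TT (l : ℂ) : Module.End ℂ (ℕ →₀ V) := (-l) • (1 : Module.End ℂ (ℕ →₀ V)) - derL

theorem T_curElt (l : ℂ) (r : Polynomial ℂ) (a : V) :
    TT l (curElt r a) = curElt ((C (-l) - X) * r) a := by
  rw [sub_mul, curElt_sub, curElt_Cmul, ← derL_curElt]
  simp [TT]

theorem Tpow_curElt (l : ℂ) (n : ℕ) (r : Polynomial ℂ) (a : V) :
    ((TT l) ^ n) (curElt r a) = curElt ((C (-l) - X) ^ n * r) a := by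
  induction n generalizing r with
  | zero => simp
  | succ m ih =>
      rw [pow_succ', Module.End.mul_apply, ih, T_curElt]
      congr 1
      ring

theorem pev_curElt2 (l : ℂ) (F : Polynomial (Polynomial ℂ)) (w : V) :
    pev l (curElt2 F w) = curElt (Polynomial.eval (C l) F) w := by
  rw [pev_eq, curElt2, Polynomial.sum, map_sum, Polynomial.eval_eq_sum,
    Polynomial.sum, curElt_finset_sum]
  refine Finset.sum_congr rfl fun n _ => ?_
  rw [← pev_eq, pev_single, mul_comm, ← C_pow, curElt_Cmul]

theorem pevOp_curElt2 (l : ℂ) (F : Polynomial (Polynomial ℂ)) (w : V) :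
    pevOp (TT l) (curElt2 F w) = curElt (Polynomial.eval (C (-l) - X) F) w := by
  rw [pevOp_eq, curElt2, Polynomial.sum, map_sum, Polynomial.eval_eq_sum,
    Polynomial.sum, curElt_finset_sum]
  refine Finset.sum_congr rfl fun n _ => ?_
  rw [← pevOp_eq, pevOp_single, Tpow_curElt]
  congr 1
  ring

theorem eval_map_CC (f : Polynomial ℂ) (y : ℂ) :
    (f.map (C : ℂ →+* Polynomial ℂ)).eval (C y) = C (f.eval y) := by
  rw [eval_map, Polynomial.eval₂_at_apply]

theorem eval_map_comp (f : Polynomial ℂ) (u : Polynomial ℂ) :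
    (f.map (C : ℂ →+* Polynomial ℂ)).eval u = f.comp u := by
  rw [eval_map]; rfl

def PB (f q : Polynomial ℂ) : Polynomial (Polynomial ℂ) :=
  ((f.map (C : ℂ →+* Polynomial ℂ)).comp (-X)) * ((q.map (C : ℂ →+* Polynomial ℂ)).comp (C X + X))

theorem PB_add_left (f f' q : Polynomial ℂ) : PB (f + f') q = PB f q + PB f' q := by
  simp [PB, Polynomial.map_add, add_comp, add_mul]

theorem PB_add_right (f q q' : Polynomial ℂ) : PB f (q + q') = PB f q + PB f q' := by
  simp [PB, Polynomial.map_add, add_comp, mul_add]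

theorem PB_Cmul_left (c : ℂ) (f q : Polynomial ℂ) :
    PB (C c * f) q = C (C c) * PB f q := by
  simp only [PB, Polynomial.map_mul, map_C, mul_comp, C_comp]
  ring

theorem PB_Cmul_right (c : ℂ) (f q : Polynomial ℂ) :
    PB f (C c * q) = C (C c) * PB f q := by
  simp only [PB, Polynomial.map_mul, map_C, mul_comp, C_comp]
  ring

theorem PB_eval_C (f q : Polynomial ℂ) (l : ℂ) :
    (PB f q).eval (C l) = C (f.eval (-l)) * q.comp (X + C l) := by
  simp only [PB, eval_mul, eval_comp, eval_neg, eval_X, eval_add, eval_C]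
  rw [show (-C l : Polynomial ℂ) = C (-l) by rw [map_neg], eval_map_CC,
    show (X : Polynomial ℂ) + C l = X + C l from rfl, eval_map_comp]

theorem PB_eval_sub (f q : Polynomial ℂ) (l : ℂ) :
    (PB f q).eval (C (-l) - X) = C (q.eval (-l)) * f.comp (X + C l) := by
  simp only [PB, eval_mul, eval_comp, eval_neg, eval_X, eval_add, eval_C]
  rw [show -(C (-l) - X) = (X : Polynomial ℂ) + C l by rw [map_neg]; ring,
    show (X : Polynomial ℂ) + (C (-l) - X) = C (-l) by ring,
    eval_map_CC, eval_map_comp, mul_comm]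

def sbr (L : SuperData V) : (ℕ →₀ V) →ₗ[ℂ] (ℕ →₀ V) →ₗ[ℂ] (ℕ →₀ (ℕ →₀ V)) :=
  Finsupp.lsum ℂ fun m =>
    { toFun := fun a => Finsupp.lsum ℂ fun k => (curElt2L (PB (X ^ m) (X ^ k))).comp (L.br a)
      map_add' := fun a a' => by
        have : (fun k => (curElt2L (PB (X ^ m) (X ^ k))).comp (L.br (a + a'))) =
            (fun k => (curElt2L (PB (X ^ m) (X ^ k))).comp (L.br a)) +
            (fun k => (curElt2L (PB (X ^ m) (X ^ k))).comp (L.br a')) := by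
          funext k
          rw [map_add, LinearMap.comp_add]
          rfl
        rw [this, map_add]
      map_smul' := fun c a => by
        have : (fun k => (curElt2L (PB (X ^ m) (X ^ k))).comp (L.br (c • a))) =
            c • (fun k => (curElt2L (PB (X ^ m) (X ^ k))).comp (L.br a)) := by
          funext k
          rw [map_smul, LinearMap.comp_smul]
          rfl
        rw [this, map_smul]
        rfl }

theorem sbr_single (L : SuperData V) (m k : ℕ) (a b : V) :
    sbr L (Finsupp.single m a) (Finsupp.single k b) =
      curElt2 (PB (X ^ m) (X ^ k)) (L.br a b) := by
  rw [sbr, Finsupp.lsum_single]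
  simp only [LinearMap.coe_mk, AddHom.coe_mk]
  rw [Finsupp.lsum_single]
  rfl

theorem sbr_curElt (L : SuperData V) (f q : Polynomial ℂ) (a b : V) :
    sbr L (curElt f a) (curElt q b) = curElt2 (PB f q) (L.br a b) := by
  induction f using Polynomial.induction_on' generalizing q with
  | add p p' hp hp' =>
      rw [curElt_add, map_add, LinearMap.add_apply, hp, hp', PB_add_left, curElt2_add]
  | monomial m c =>
      induction q using Polynomial.induction_on' with
      | add r r' hr hr' =>
          rw [curElt_add, map_add, hr, hr', PB_add_right, curElt2_add]
      | monomial k d =>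
          rw [curElt_monomial, curElt_monomial, ← Finsupp.smul_single, ← Finsupp.smul_single]
          simp only [map_smul, LinearMap.smul_apply]
          rw [sbr_single, ← C_mul_X_pow_eq_monomial, ← C_mul_X_pow_eq_monomial,
            PB_Cmul_left, PB_Cmul_right]
          rw [curElt2_CCmul, curElt2_CCmul, smul_comm]

theorem lbC (L : SuperData V) (l : ℂ) (f q : Polynomial ℂ) (a b : V) :
    pev l (sbr L (curElt f a) (curElt q b)) =
      f.eval (-l) • curElt (q.comp (X + C l)) (L.br a b) := by
  rw [sbr_curElt, pev_curElt2, PB_eval_C, curElt_Cmul]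

theorem lbOpC (L : SuperData V) (l : ℂ) (f q : Polynomial ℂ) (a b : V) :
    pevOp (TT l) (sbr L (curElt f a) (curElt q b)) =
      q.eval (-l) • curElt (f.comp (X + C l)) (L.br a b) := by
  rw [sbr_curElt, pevOp_curElt2, PB_eval_sub, curElt_Cmul]

def alphaL (L : SuperData V) : (ℕ →₀ V) →ₗ[ℂ] (ℕ →₀ V) :=
  Finsupp.mapRange.linearMap (L.alpha : V →ₗ[ℂ] V)

theorem alphaL_apply (L : SuperData V) (p : ℕ →₀ V) (n : ℕ) :
    alphaL L p n = L.alpha (p n) := by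
  simp [alphaL]

theorem alphaL_curElt (L : SuperData V) (f : Polynomial ℂ) (a : V) :
    alphaL L (curElt f a) = curElt f (L.alpha a) := by
  ext n; simp [alphaL_apply, curElt_apply, map_smul]

def sset (W : Submodule ℂ V) : Set (ℕ →₀ V) :=
  {x | ∃ n v, v ∈ W ∧ x = Finsupp.single n v}

theorem mem_span_sset {W : Submodule ℂ V} {a : ℕ →₀ V} (ha : a ∈ liftG W) :
    a ∈ Submodule.span ℂ (sset W) := by
  rw [← Finsupp.sum_single a]
  apply Submodule.finsuppSum_mem
  intro n _
  exact Submodule.subset_span ⟨n, a n, ha n, rfl⟩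

theorem mem_liftG_top (a : ℕ →₀ V) : a ∈ liftG (⊤ : Submodule ℂ V) := fun _ => trivial

theorem liftG_mono {W W' : Submodule ℂ V} (h : W ≤ W') : liftG W ≤ liftG W' :=
  fun _ hx n => h (hx n)

theorem liftG_bot : liftG (⊥ : Submodule ℂ V) = ⊥ := by
  rw [eq_bot_iff]
  intro x hx
  rw [Submodule.mem_bot]
  ext n
  simpa using hx n

end CurAux

/-- For a Hom-Lie superalgebra `(g, [·,·], α)`, the current algebra
`Cur g = ℂ[∂] ⊗ g` (encoded as `ℕ →₀ g`), with `∂` acting as multiplication by the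
variable, twist `f(∂) ⊗ a ↦ f(∂) ⊗ α(a)`, grading `(Cur g)_θ = ℂ[∂] ⊗ g_θ` and
`λ`-bracket `[(f(∂) ⊗ a)_λ (q(∂) ⊗ b)] = f(-λ) q(∂ + λ) ⊗ [a, b]`, is a Hom-Lie
conformal superalgebra. -/
theorem current_homLie (L : SuperData V) (hL : IsHLSuper L) :
    ∃ S : Data (ℕ →₀ V),
      S.der = Finsupp.lmapDomain V ℂ (fun n => n + 1) ∧
      S.alpha = Finsupp.mapRange.linearMap (L.alpha : V →ₗ[ℂ] V) ∧
      S.G = (fun i => liftG (L.G i)) ∧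
      (∀ (f q : Polynomial ℂ) (a b : V) (l : ℂ),
        S.lb l (curElt f a) (curElt q b) =
          f.eval (-l) • curElt (q.comp (Polynomial.X + Polynomial.C l)) (L.br a b)) ∧
      IsHLCS S := by
  classical
  open Polynomial in
  refine ⟨⟨derL, alphaL L, fun i => liftG (L.G i), sbr L⟩, rfl, rfl, rfl,
    fun f q a b l => lbC L l f q a b, ?_⟩
  have hdec := (DirectSum.isInternal_submodule_iff_iSupIndep_and_iSup_eq_top L.G).mp hL.internal
  constructor
  -- internal
  · refine (DirectSum.isInternal_submodule_iff_iSupIndep_and_iSup_eq_top _).mpr ⟨?_, ?_⟩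
    · intro i
      have h2 : L.G i ⊓ (⨆ j, ⨆ _ : j ≠ i, L.G j) = ⊥ := disjoint_iff.mp (hdec.1 i)
      rw [disjoint_iff, ← le_bot_iff]
      calc liftG (L.G i) ⊓ (⨆ j, ⨆ _ : j ≠ i, liftG (L.G j))
          ≤ liftG (L.G i) ⊓ liftG (⨆ j, ⨆ _ : j ≠ i, L.G j) :=
            inf_le_inf_left _ (iSup₂_le fun j hj =>
              liftG_mono (le_iSup₂ (f := fun j (_ : j ≠ i) => L.G j) j hj))
        _ ≤ liftG (L.G i ⊓ ⨆ j, ⨆ _ : j ≠ i, L.G j) := by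
            intro x hx n
            exact Submodule.mem_inf.mpr
              ⟨(Submodule.mem_inf.mp hx).1 n, (Submodule.mem_inf.mp hx).2 n⟩
        _ = ⊥ := by rw [h2, liftG_bot]
    · rw [eq_top_iff]
      intro x _
      rw [← Finsupp.sum_single x]
      apply Submodule.finsuppSum_mem
      intro n _
      have hx : x n ∈ (⨆ i, L.G i) := hdec.2 ▸ Submodule.mem_top
      have h1 : Finsupp.single n (x n) ∈
          Submodule.map (Finsupp.lsingle (R := ℂ) (M := V) n) (⨆ i, L.G i) := ⟨x n, hx, rfl⟩
      rw [Submodule.map_iSup] at h1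
      have hle : (⨆ i, Submodule.map (Finsupp.lsingle (R := ℂ) (M := V) n) (L.G i)) ≤
          ⨆ i, liftG (L.G i) := by
        refine iSup_mono fun i => ?_
        rintro _ ⟨v, hv, rfl⟩ p
        rw [Finsupp.lsingle_apply, Finsupp.single_apply]
        split_ifs
        exacts [hv, (L.G i).zero_mem]
      exact hle h1
  -- der_even
  · intro i a ha n
    cases n with
    | zero => rw [derL_apply_zero]; exact (L.G i).zero_mem
    | succ m => rw [derL_apply_succ]; exact ha m
  -- alpha_even
  · intro i a ha n
    rw [alphaL_apply]
    exact hL.alpha_even i _ (ha n)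
  -- alpha_der
  · intro a
    ext n
    cases n with
    | zero => rw [derL_apply_zero, alphaL_apply, derL_apply_zero, map_zero]
    | succ m => rw [alphaL_apply, derL_apply_succ, derL_apply_succ, alphaL_apply]
  -- br_grade
  · intro i j a ha b hb n
    have hsA := mem_span_sset ha; clear ha
    induction hsA using Submodule.span_induction with
    | mem x hx =>
        obtain ⟨m, v, hv, rfl⟩ := hx
        have hsB := mem_span_sset hb; clear hb
        induction hsB using Submodule.span_induction with
        | mem y hy =>
            obtain ⟨k, w, hw, rfl⟩ := hy
            intro p
            rw [sbr_single, curElt2_apply, curElt_apply]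
            exact (L.G (i + j)).smul_mem _ (hL.br_grade i j v hv w hw)
        | zero =>
            intro p
            simp only [map_zero, Finsupp.coe_zero, Pi.zero_apply]
            exact (L.G (i + j)).zero_mem
        | add y y' _ _ ihy ihy' =>
            intro p
            simp only [map_add, Finsupp.add_apply]
            exact (L.G (i + j)).add_mem (ihy p) (ihy' p)
        | smul e y _ ihy =>
            intro p
            simp only [map_smul, Finsupp.smul_apply]
            exact (L.G (i + j)).smul_mem e (ihy p)
    | zero =>
        intro p
        simp only [map_zero, LinearMap.zero_apply, Finsupp.coe_zero, Pi.zero_apply]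
        exact (L.G (i + j)).zero_mem
    | add x x' _ _ ihx ihx' =>
        intro p
        simp only [map_add, LinearMap.add_apply, Finsupp.add_apply]
        exact (L.G (i + j)).add_mem (ihx p) (ihx' p)
    | smul e x _ ihx =>
        intro p
        simp only [map_smul, LinearMap.smul_apply, Finsupp.smul_apply]
        exact (L.G (i + j)).smul_mem e (ihx p)
  -- conf_left
  · intro l a b
    show pev l (sbr L (derL a) b) = -l • pev l (sbr L a b)
    induction mem_span_sset (mem_liftG_top a) using Submodule.span_induction with
    | mem x hx =>
        obtain ⟨m, v, -, rfl⟩ := hx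
        induction mem_span_sset (mem_liftG_top b) using Submodule.span_induction with
        | mem y hy =>
            obtain ⟨k, w, -, rfl⟩ := hy
            rw [show (Finsupp.single m v : ℕ →₀ V) = curElt (X ^ m) v from (curElt_X_pow m v).symm,
              show (Finsupp.single k w : ℕ →₀ V) = curElt (X ^ k) w from (curElt_X_pow k w).symm,
              derL_curElt, lbC, lbC, smul_smul]
            congr 1
            simp [eval_mul]
        | zero => simp [pev_zero]
        | add y y' _ _ ihy ihy' =>
            simp only [map_add, pev_add, ihy, ihy']
            module
        | smul e y _ ihy =>
            simp only [map_smul, LinearMap.smul_apply, pev_smul, ihy]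
            module
    | zero => simp [pev_zero]
    | add x x' _ _ ihx ihx' =>
        simp only [map_add, LinearMap.add_apply, pev_add, ihx, ihx']
        module
    | smul e x _ ihx =>
        simp only [map_smul, LinearMap.smul_apply, pev_smul, ihx]
        module
  -- conf_right
  · intro l a b
    show pev l (sbr L a (derL b)) = derL (pev l (sbr L a b)) + l • pev l (sbr L a b)
    induction mem_span_sset (mem_liftG_top a) using Submodule.span_induction with
    | mem x hx =>
        obtain ⟨m, v, -, rfl⟩ := hx
        induction mem_span_sset (mem_liftG_top b) using Submodule.span_induction with
        | mem y hy =>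
            obtain ⟨k, w, -, rfl⟩ := hy
            rw [show (Finsupp.single m v : ℕ →₀ V) = curElt (X ^ m) v from (curElt_X_pow m v).symm,
              show (Finsupp.single k w : ℕ →₀ V) = curElt (X ^ k) w from (curElt_X_pow k w).symm,
              derL_curElt, lbC, lbC, map_smul, derL_curElt]
            rw [show (X * X ^ k : Polynomial ℂ).comp (X + C l) =
                X * ((X ^ k : Polynomial ℂ).comp (X + C l)) +
                  C l * ((X ^ k : Polynomial ℂ).comp (X + C l)) by
              rw [mul_comp, X_comp]; ring]
            rw [curElt_add, curElt_Cmul]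
            module
        | zero => simp [pev_zero]
        | add y y' _ _ ihy ihy' =>
            simp only [map_add, pev_add, ihy, ihy']
            module
        | smul e y _ ihy =>
            simp only [map_smul, LinearMap.smul_apply, pev_smul, ihy]
            module
    | zero => simp [pev_zero]
    | add x x' _ _ ihx ihx' =>
        simp only [map_add, LinearMap.add_apply, pev_add, ihx, ihx']
        module
    | smul e x _ ihx =>
        simp only [map_smul, LinearMap.smul_apply, pev_smul, ihx]
        module
  -- skew
  · intro i j a ha b hb l
    show pev l (sbr L a b) = (-sg i j) • pevOp (TT l) (sbr L b a)
    have hsA := mem_span_sset ha; clear ha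
    induction hsA using Submodule.span_induction with
    | mem x hx =>
        obtain ⟨m, v, hv, rfl⟩ := hx
        have hsB := mem_span_sset hb; clear hb
        induction hsB using Submodule.span_induction with
        | mem y hy =>
            obtain ⟨k, w, hw, rfl⟩ := hy
            rw [show (Finsupp.single m v : ℕ →₀ V) = curElt (X ^ m) v from (curElt_X_pow m v).symm,
              show (Finsupp.single k w : ℕ →₀ V) = curElt (X ^ k) w from (curElt_X_pow k w).symm,
              lbC, lbOpC, hL.skew i j v hv w hw, curElt_smul_right]
            module
        | zero => simp [pev_zero, pevOp_zero]
        | add y y' _ _ ihy ihy' =>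
            simp only [map_add, LinearMap.add_apply, pev_add, pevOp_add, ihy, ihy']
            module
        | smul e y _ ihy =>
            simp only [map_smul, LinearMap.smul_apply, pev_smul, pevOp_smul, ihy]
            module
    | zero => simp [pev_zero, pevOp_zero]
    | add x x' _ _ ihx ihx' =>
        simp only [map_add, LinearMap.add_apply, pev_add, pevOp_add, ihx, ihx']
        module
    | smul e x _ ihx =>
        simp only [map_smul, LinearMap.smul_apply, pev_smul, pevOp_smul, ihx]
        module
  -- jacobi
  · intro i j a ha b hb c l m
    show pev l (sbr L (alphaL L a) (pev m (sbr L b c))) =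
      pev (l + m) (sbr L (pev l (sbr L a b)) (alphaL L c)) +
        sg i j • pev m (sbr L (alphaL L b) (pev l (sbr L a c)))
    have hsA := mem_span_sset ha; clear ha
    induction hsA using Submodule.span_induction with
    | mem x hx =>
        obtain ⟨p, a', ha', rfl⟩ := hx
        have hsB := mem_span_sset hb; clear hb
        induction hsB using Submodule.span_induction with
        | mem y hy =>
            obtain ⟨q', b', hb', rfl⟩ := hy
            induction mem_span_sset (mem_liftG_top c) using Submodule.span_induction with
            | mem z hz =>
                obtain ⟨r', c', -, rfl⟩ := hz
                rw [show (Finsupp.single p a' : ℕ →₀ V) = curElt (X ^ p) a' from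
                    (curElt_X_pow p a').symm,
                  show (Finsupp.single q' b' : ℕ →₀ V) = curElt (X ^ q') b' from
                    (curElt_X_pow q' b').symm,
                  show (Finsupp.single r' c' : ℕ →₀ V) = curElt (X ^ r') c' from
                    (curElt_X_pow r' c').symm]
                rw [alphaL_curElt, alphaL_curElt, alphaL_curElt, lbC, lbC, lbC]
                rw [map_smul, pev_smul, lbC, map_smul, LinearMap.smul_apply, pev_smul, lbC,
                  map_smul, pev_smul, lbC]
                rw [show ((X ^ r' : Polynomial ℂ).comp (X + C m)).comp (X + C l) =
                    (X ^ r' : Polynomial ℂ).comp (X + C (l + m)) by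
                  rw [comp_assoc]; congr 1; rw [add_comp, X_comp, C_comp, map_add]; ring]
                rw [show ((X ^ r' : Polynomial ℂ).comp (X + C l)).comp (X + C m) =
                    (X ^ r' : Polynomial ℂ).comp (X + C (l + m)) by
                  rw [comp_assoc]; congr 1; rw [add_comp, X_comp, C_comp, map_add]; ring]
                rw [show ((X ^ q' : Polynomial ℂ).comp (X + C l)).eval (-(l + m)) =
                    (X ^ q' : Polynomial ℂ).eval (-m) by
                  rw [eval_comp]; congr 1; simp]
                rw [hL.jacobi i j a' ha' b' hb' c', curElt_add_right, curElt_smul_right]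
                module
            | zero => simp [pev_zero]
            | add z z' _ _ ihz ihz' =>
                simp only [map_add, pev_add, ihz, ihz']
                module
            | smul e z _ ihz =>
                simp only [map_smul, LinearMap.smul_apply, pev_smul, ihz]
                module
        | zero => simp [pev_zero]
        | add y y' _ _ ihy ihy' =>
            simp only [map_add, LinearMap.add_apply, pev_add, ihy, ihy']
            module
        | smul e y _ ihy =>
            simp only [map_smul, LinearMap.smul_apply, pev_smul, ihy]
            module
    | zero => simp [pev_zero]
    | add x x' _ _ ihx ihx' =>
        simp only [map_add, LinearMap.add_apply, pev_add, ihx, ihx']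
        module
    | smul e x _ ihx =>
        simp only [map_smul, LinearMap.smul_apply, pev_smul, ihx]
        module

end HLCS
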